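/- Let S, P : ℝ → ℝ be a solution of the Type II model and let t₀ ≥ 0. Suppose 0 < S(t) ≤ v_c·K and P(t) ≥ 0 for all t ≥ t₀. Then for all t ≥ t₀, 0 ≤ P(t) ≤ P(t₀)·exp(r·(t − t₀)), where r = δ·(α·β_v·v_c²·K/(δ·(1 + β_v·v_c²·E_p·K)) − 1). In particular, if β_v·K·v_c²·(α − δ·E_p) < δ then r < 0 and P(t) → 0 as t → ∞. -/

import Mathlib

open Filter

/-- Exponential bound on the pathogen density of the Type II model:
if `0 < S(t) ≤ vc·K` and `P(t) ≥ 0` for all `t ≥ t₀`, then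
`0 ≤ P(t) ≤ P(t₀)·exp(r·(t − t₀))` with
`r = δ·(α·βv·vc²·K/(δ·(1 + βv·vc²·Ep·K)) − 1)`; in particular, if
`βv·K·vc²·(α − δ·Ep) < δ` then `r < 0` and `P(t) → 0` as `t → ∞`. -/
theorem typeII_pathogen_exponential_bound (μv βv Ep K vc α δ : ℝ)
    (hμ : 0 < μv) (hβ : 0 < βv) (hE : 0 < Ep) (hK : 0 < K) (hv : 0 < vc)
    (hα : 0 < α) (hδ : 0 < δ)
    (S P : ℝ → ℝ) (hS : Differentiable ℝ S) (hP : Differentiable ℝ P)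
    (hS' : ∀ t : ℝ,
      deriv S t = vc * μv * S t * (1 - S t / (vc * K)) -
        βv * vc * S t * P t / (1 + βv * vc * Ep * S t))
    (hP' : ∀ t : ℝ,
      deriv P t = α * βv * vc * S t * P t / (1 + βv * vc * Ep * S t) - δ * P t)
    (t₀ : ℝ) (ht₀ : 0 ≤ t₀)
    (hbound : ∀ t ≥ t₀, 0 < S t ∧ S t ≤ vc * K ∧ 0 ≤ P t) :
    (∀ t ≥ t₀, 0 ≤ P t ∧
      P t ≤ P t₀ *
        Real.exp (δ * (α * βv * vc ^ 2 * K / (δ * (1 + βv * vc ^ 2 * Ep * K)) - 1) *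
          (t - t₀))) ∧
    (βv * K * vc ^ 2 * (α - δ * Ep) < δ →
      δ * (α * βv * vc ^ 2 * K / (δ * (1 + βv * vc ^ 2 * Ep * K)) - 1) < 0 ∧
      Tendsto P atTop (nhds 0)) := by
  have hBpos : 0 < 1 + βv * vc ^ 2 * Ep * K := by positivity
  set r : ℝ := α * βv * vc ^ 2 * K / (1 + βv * vc ^ 2 * Ep * K) - δ with hrdef
  have hreq : δ * (α * βv * vc ^ 2 * K / (δ * (1 + βv * vc ^ 2 * Ep * K)) - 1) = r := by
    rw [hrdef]; field_simp
  -- key differential inequality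
  have key : ∀ t ≥ t₀, deriv P t ≤ r * P t := by
    intro t ht
    obtain ⟨hSpos, hSle, hPnn⟩ := hbound t ht
    have hDpos : 0 < 1 + βv * vc * Ep * S t := by positivity
    have hfrac : α * βv * vc * S t / (1 + βv * vc * Ep * S t)
        ≤ α * βv * vc ^ 2 * K / (1 + βv * vc ^ 2 * Ep * K) := by
      rw [div_le_div_iff₀ hDpos hBpos]
      nlinarith [mul_le_mul_of_nonneg_left hSle (le_of_lt (mul_pos hα hβ))]
    have := mul_le_mul_of_nonneg_right hfrac hPnn
    rw [hP' t, hrdef]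
    have h1 : α * βv * vc * S t * P t / (1 + βv * vc * Ep * S t)
        = α * βv * vc * S t / (1 + βv * vc * Ep * S t) * P t := by ring
    rw [h1]
    nlinarith
  -- auxiliary: g t = P t * exp (-(r*t)) is antitone on [t₀, ∞)
  have hgderiv : ∀ t : ℝ, HasDerivAt (fun u => P u * Real.exp (-(r * u)))
      ((deriv P t - r * P t) * Real.exp (-(r * t))) t := by
    intro t
    have h1 : HasDerivAt (fun u : ℝ => -(r * u)) (-r) t := by
      simpa using ((hasDerivAt_id t).const_mul r).fun_neg
    have h2 := h1.exp
    have h3 := ((hP t).hasDerivAt).fun_mul h2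
    exact h3.congr_deriv (by ring)
  have anti : AntitoneOn (fun u => P u * Real.exp (-(r * u))) (Set.Ici t₀) := by
    apply antitoneOn_of_deriv_nonpos (convex_Ici t₀)
    · exact ((hP.continuous).mul (Real.continuous_exp.comp (continuous_const.mul continuous_id).neg)).continuousOn
    · intro x hx
      exact ((hgderiv x).differentiableAt).differentiableWithinAt
    · intro x hx
      rw [interior_Ici] at hx
      rw [(hgderiv x).deriv]
      have hx' : x ≥ t₀ := le_of_lt hx
      have := key x hx'
      have hexp : (0:ℝ) ≤ Real.exp (-(r * x)) := (Real.exp_pos _).le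
      nlinarith
  have main : ∀ t ≥ t₀, 0 ≤ P t ∧ P t ≤ P t₀ * Real.exp (r * (t - t₀)) := by
    intro t ht
    refine ⟨(hbound t ht).2.2, ?_⟩
    have hle := anti (Set.self_mem_Ici) (Set.mem_Ici.mpr ht) ht
    calc P t = P t * Real.exp (-(r * t)) * Real.exp (r * t) := by
              rw [mul_assoc, ← Real.exp_add]; simp
      _ ≤ P t₀ * Real.exp (-(r * t₀)) * Real.exp (r * t) :=
              mul_le_mul_of_nonneg_right hle (Real.exp_pos _).le
      _ = P t₀ * Real.exp (r * (t - t₀)) := by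
              rw [mul_assoc, ← Real.exp_add]; ring_nf
  constructor
  · intro t ht
    rw [hreq]
    exact main t ht
  · intro hcond
    have hrneg : r < 0 := by
      rw [hrdef, sub_neg, div_lt_iff₀ hBpos]
      nlinarith
    refine ⟨by rw [hreq]; exact hrneg, ?_⟩
    have h1 : Tendsto (fun t : ℝ => t - t₀) atTop atTop :=
      tendsto_atTop_add_const_right _ _ tendsto_id
    have h2 : Tendsto (fun t : ℝ => r * (t - t₀)) atTop atBot := by
      exact Tendsto.const_mul_atTop_of_neg hrneg h1
    have h3 : Tendsto (fun t : ℝ => Real.exp (r * (t - t₀))) atTop (nhds 0) :=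
      Real.tendsto_exp_atBot.comp h2
    have h4 : Tendsto (fun t : ℝ => P t₀ * Real.exp (r * (t - t₀))) atTop (nhds 0) := by
      simpa using h3.const_mul (P t₀)
    apply tendsto_of_tendsto_of_tendsto_of_le_of_le' tendsto_const_nhds h4
    · filter_upwards [eventually_ge_atTop t₀] with t ht using (main t ht).1
    · filter_upwards [eventually_ge_atTop t₀] with t ht using (main t ht).2
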